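/- Let (Ω, P) be a probability space, a > 0, H : Ω → ℝ a nonnegative measurable random variable, and F : [0,a] → ℝ a function with F(t) ≥ 1 for all t, such that P(H > t) = 1/F(t) for every t ∈ [0,a] and P(H = a) = 0. Assume F(a) > 1. Then ∫_{{H < a}} H dP = ∫_0^a dt/F(t) − a/F(a), and consequently a + (F(a) − 1)·E[H | H < a] = F(a)·∫_0^a dt/F(t), where E[H | H < a] := (∫_{{H < a}} H dP)/P(H < a). -/

import Mathlib

open MeasureTheory Real intervalIntegral

/-- Expected node depth conditioned to be small, for a coalescent point process node depth `H`
with inverse tail distribution `F` (i.e. `P(H > t) = 1/F(t)` on `[0,a]`) and `P(H = a) = 0`: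
`∫_{H < a} H dP = ∫_0^a dt/F(t) - a/F(a)`, and consequently the expected total tree length
satisfies `a + (F(a)-1)·E[H | H < a] = F(a)·∫_0^a dt/F(t)`. -/
theorem conditional_expectation_node_depth
    {Ω : Type*} [MeasurableSpace Ω] (μ : Measure Ω) [IsProbabilityMeasure μ]
    (a : ℝ) (ha : 0 < a) (H : Ω → ℝ) (hH : Measurable H) (hHnn : ∀ ω, 0 ≤ H ω)
    (F : ℝ → ℝ) (hF1 : ∀ t ∈ Set.Icc 0 a, 1 ≤ F t)
    (hFa : 1 < F a)
    (htail : ∀ t ∈ Set.Icc 0 a, (μ {ω | t < H ω}).toReal = 1 / F t)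
    (hHa : μ {ω | H ω = a} = 0) :
    (∫ ω in {ω | H ω < a}, H ω ∂μ) = (∫ t in (0:ℝ)..a, 1 / F t) - a / F a ∧
    a + (F a - 1) *
        ((∫ ω in {ω | H ω < a}, H ω ∂μ) / (μ {ω | H ω < a}).toReal) =
      F a * ∫ t in (0:ℝ)..a, 1 / F t := by
  have hsetlt : MeasurableSet {ω | H ω < a} := hH measurableSet_Iio
  -- μ {a ≤ H} = μ {a < H}
  have hge : μ {ω | a ≤ H ω} = μ {ω | a < H ω} := by
    have h1 : {ω | a ≤ H ω} ⊆ {ω | a < H ω} ∪ {ω | H ω = a} := by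
      intro ω hω
      rcases lt_or_eq_of_le (show a ≤ H ω from hω) with h | h
      · exact Or.inl h
      · exact Or.inr h.symm
    refine le_antisymm ?_ (measure_mono fun ω hω => le_of_lt (show a < H ω from hω))
    calc μ {ω | a ≤ H ω} ≤ μ ({ω | a < H ω} ∪ {ω | H ω = a}) := measure_mono h1
      _ ≤ μ {ω | a < H ω} + μ {ω | H ω = a} := measure_union_le _ _
      _ = μ {ω | a < H ω} := by rw [hHa, add_zero]
  have hgeR : (μ {ω | a ≤ H ω}).toReal = 1 / F a := by
    rw [hge]; exact htail a ⟨le_of_lt ha, le_refl a⟩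
  -- key decomposition for t < a
  have hdec : ∀ t ∈ Set.Icc 0 a,
      (μ ({ω | t < H ω} ∩ {ω | H ω < a})).toReal = 1 / F t - 1 / F a := by
    intro t ht
    rcases eq_or_lt_of_le ht.2 with rfl | hta
    · have : {ω | t < H ω} ∩ {ω | H ω < t} = (∅ : Set Ω) := by
        ext ω; simp only [Set.mem_inter_iff, Set.mem_setOf_eq, Set.mem_empty_iff_false,
          iff_false, not_and]
        intro h1; exact not_lt.mpr h1.le
      rw [this]; simp
    · have hsplit : μ {ω | t < H ω}
          = μ ({ω | t < H ω} ∩ {ω | H ω < a}) + μ ({ω | t < H ω} \ {ω | H ω < a}) :=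
        (measure_inter_add_diff _ hsetlt).symm
      have hdiff : {ω | t < H ω} \ {ω | H ω < a} = {ω | a ≤ H ω} := by
        ext ω
        simp only [Set.mem_diff, Set.mem_setOf_eq, not_lt]
        constructor
        · exact fun h => h.2
        · exact fun h => ⟨lt_of_lt_of_le hta h, h⟩
      rw [hdiff] at hsplit
      have hfin1 : μ ({ω | t < H ω} ∩ {ω | H ω < a}) ≠ ⊤ := measure_ne_top _ _
      have hfin2 : μ {ω | a ≤ H ω} ≠ ⊤ := measure_ne_top _ _
      have := congrArg ENNReal.toReal hsplit
      rw [ENNReal.toReal_add hfin1 hfin2, htail t ht, hgeR] at this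
      linarith
  -- the tail function is antitone and measurable
  have hG_anti : Antitone fun t : ℝ => (μ ({ω | t < H ω} ∩ {ω | H ω < a})).toReal := by
    intro s t hst
    apply ENNReal.toReal_mono (measure_ne_top _ _)
    exact measure_mono (Set.inter_subset_inter_left _ fun ω hω => lt_of_le_of_lt hst hω)
  have hG_mble : Measurable fun t : ℝ => (μ ({ω | t < H ω} ∩ {ω | H ω < a})).toReal :=
    hG_anti.measurable
  -- integrability of H on {H < a}
  have hHint : Integrable H (μ.restrict {ω | H ω < a}) := by
    refine Measure.integrableOn_of_bounded (M := a) (measure_ne_top _ _) hH.aestronglyMeasurable ?_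
    filter_upwards [ae_restrict_mem hsetlt] with ω hω
    rw [Real.norm_eq_abs, abs_of_nonneg (hHnn ω)]
    exact le_of_lt hω
  -- layer cake formula
  have hlayer : (∫ ω in {ω | H ω < a}, H ω ∂μ)
      = ∫ t in Set.Ioi (0:ℝ), (μ ({ω | t < H ω} ∩ {ω | H ω < a})).toReal := by
    rw [hHint.integral_eq_integral_meas_lt (Filter.Eventually.of_forall fun ω => hHnn ω)]
    congr 1
    ext t
    rw [measureReal_def, Measure.restrict_apply (measurableSet_lt measurable_const hH)]
  -- restrict the integral to Ioc 0 a
  have hIoc : (∫ t in Set.Ioi (0:ℝ), (μ ({ω | t < H ω} ∩ {ω | H ω < a})).toReal)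
      = ∫ t in Set.Ioc (0:ℝ) a, (μ ({ω | t < H ω} ∩ {ω | H ω < a})).toReal := by
    refine setIntegral_eq_of_subset_of_forall_diff_eq_zero measurableSet_Ioi
      Set.Ioc_subset_Ioi_self ?_
    intro t ht
    have hta : a < t := by
      rcases ht with ⟨ht1, ht2⟩
      simp only [Set.mem_Ioc, not_and, not_le] at ht2
      exact ht2 ht1
    have : {ω | t < H ω} ∩ {ω | H ω < a} = (∅ : Set Ω) := by
      ext ω
      simp only [Set.mem_inter_iff, Set.mem_setOf_eq, Set.mem_empty_iff_false, iff_false, not_and,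
        not_lt]
      intro h1; linarith
    rw [this]; simp
  -- the integrand equals 1/F t - 1/F a on Ioc 0 a
  have hcongr : (∫ t in Set.Ioc (0:ℝ) a, (μ ({ω | t < H ω} ∩ {ω | H ω < a})).toReal)
      = ∫ t in Set.Ioc (0:ℝ) a, (1 / F t - 1 / F a) := by
    refine setIntegral_congr_fun measurableSet_Ioc fun t ht => ?_
    exact hdec t ⟨le_of_lt ht.1, ht.2⟩
  -- integrability of 1/F on Ioc 0 a
  have hFint : IntegrableOn (fun t => 1 / F t) (Set.Ioc (0:ℝ) a) := by
    have hg_anti : Antitone fun t : ℝ => (μ {ω | t < H ω}).toReal := by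
      intro s t hst
      apply ENNReal.toReal_mono (measure_ne_top _ _)
      exact measure_mono fun ω hω => lt_of_le_of_lt hst hω
    have hg_int : IntegrableOn (fun t : ℝ => (μ {ω | t < H ω}).toReal) (Set.Ioc (0:ℝ) a) := by
      refine Measure.integrableOn_of_bounded (M := 1) (by simp) ?_ ?_
      · exact hg_anti.measurable.aestronglyMeasurable
      · filter_upwards with t
        rw [Real.norm_eq_abs, abs_of_nonneg ENNReal.toReal_nonneg]
        exact ENNReal.toReal_le_of_le_ofReal zero_le_one (by simpa using prob_le_one)
    refine hg_int.congr_fun (fun t ht => htail t ⟨le_of_lt ht.1, ht.2⟩) measurableSet_Ioc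
  have hvol : (volume (Set.Ioc (0:ℝ) a)).toReal = a := by
    simp [Real.volume_Ioc, ha.le]
  -- evaluate the integral of the difference
  have hsub : (∫ t in Set.Ioc (0:ℝ) a, (1 / F t - 1 / F a))
      = (∫ t in (0:ℝ)..a, 1 / F t) - a / F a := by
    rw [MeasureTheory.integral_sub hFint (integrableOn_const measure_Ioc_lt_top.ne)]
    rw [intervalIntegral.integral_of_le ha.le]
    rw [setIntegral_const, measureReal_def, hvol, smul_eq_mul, mul_one_div]
  have hmain : (∫ ω in {ω | H ω < a}, H ω ∂μ) = (∫ t in (0:ℝ)..a, 1 / F t) - a / F a := by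
    rw [hlayer, hIoc, hcongr, hsub]
  refine ⟨hmain, ?_⟩
  -- probability of {H < a}
  have hPlt : (μ {ω | H ω < a}).toReal = 1 - 1 / F a := by
    have hcompl : {ω | H ω < a}ᶜ = {ω | a ≤ H ω} := by
      ext ω; simp [not_lt]
    have := measure_compl hsetlt (measure_ne_top μ _)
    rw [hcompl, measure_univ] at this
    have h2 := congrArg ENNReal.toReal this
    rw [ENNReal.toReal_sub_of_le (by simpa using prob_le_one) (by simp), hgeR] at h2
    simp only [ENNReal.toReal_one] at h2
    linarith
  have hFa0 : F a ≠ 0 := by positivity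
  have hFa1 : F a - 1 ≠ 0 := by linarith
  rw [hmain, hPlt]
  have : (1:ℝ) - 1 / F a = (F a - 1) / F a := by field_simp
  rw [this]
  field_simp
  ring
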